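/- If κ is an infinite cardinal and there is a partition of ℝ into κ Borel sets, then there is a continuous bijection from the space κ^ω (the countable power of the discrete space of size κ) onto ℝ. -/

import Mathlib

open Set Filter Topology

noncomputable section
namespace Stmt12

abbrev NN := ℕ → ℕ


lemma cylinder_mem_nhds {β : Type*} [TopologicalSpace β] [DiscreteTopology β]
    (x : ℕ → β) (n : ℕ) : {y : ℕ → β | ∀ k < n, y k = x k} ∈ 𝓝 x := by
  have : {y : ℕ → β | ∀ k < n, y k = x k} =
      (↑(Finset.range n) : Set ℕ).pi (fun k => {x k}) := by
    ext y; simp [Set.mem_pi]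
  rw [this]
  refine IsOpen.mem_nhds ?_ ?_
  · exact isOpen_set_pi (Finset.range n).finite_toSet (fun k _ => isOpen_discrete _)
  · intro k _; rfl

/-! ### Sums of powers of 1/2 along strictly monotone exponent sequences -/

def G (s : ℕ → ℕ) : ℝ := ∑' k, ((2:ℝ)⁻¹) ^ (s k)

lemma sm_add_le {s : ℕ → ℕ} (hs : StrictMono s) (k j : ℕ) : s k + j ≤ s (j + k) := by
  induction j with
  | zero => simp
  | succ m ih =>
      have : s (m + k) < s (m + 1 + k) := hs (by omega)
      omega

lemma summable_G {s : ℕ → ℕ} (hs : StrictMono s) :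
    Summable (fun k => ((2:ℝ)⁻¹) ^ (s k)) := by
  apply Summable.of_nonneg_of_le (fun k => by positivity)
    (fun k => ?_) (summable_geometric_of_lt_one (by norm_num) (by norm_num : (2:ℝ)⁻¹ < 1))
  exact pow_le_pow_of_le_one (by norm_num) (by norm_num) hs.le_apply

lemma tsum_geometric_half : ∑' (k:ℕ), ((2:ℝ)⁻¹) ^ k = 2 := by
  rw [tsum_geometric_of_lt_one (by norm_num) (by norm_num)]
  norm_num

/-- tail estimate: `∑_{j} (1/2)^(s (j+k)) ≤ (1/2)^(s k) * 2`. -/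
lemma G_tail_le {s : ℕ → ℕ} (hs : StrictMono s) (k : ℕ) :
    ∑' j, ((2:ℝ)⁻¹) ^ (s (j + k)) ≤ ((2:ℝ)⁻¹) ^ (s k) * 2 := by
  have h1 : ∀ j : ℕ, ((2:ℝ)⁻¹) ^ (s (j + k)) ≤ ((2:ℝ)⁻¹) ^ (s k) * ((2:ℝ)⁻¹) ^ j := by
    intro j
    rw [← pow_add]
    exact pow_le_pow_of_le_one (by norm_num) (by norm_num) (sm_add_le hs k j)
  calc ∑' j, ((2:ℝ)⁻¹) ^ (s (j + k))
      ≤ ∑' j, ((2:ℝ)⁻¹) ^ (s k) * ((2:ℝ)⁻¹) ^ j := by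
        apply Summable.tsum_le_tsum h1 ((summable_G hs).comp_injective (add_left_injective k))
        exact (summable_geometric_of_lt_one (by norm_num) (by norm_num)).mul_left _
    _ = ((2:ℝ)⁻¹) ^ (s k) * 2 := by rw [tsum_mul_left, tsum_geometric_half]

lemma G_pos {s : ℕ → ℕ} (hs : StrictMono s) : 0 < G s :=
  Summable.tsum_pos (summable_G hs) (fun k => by positivity) 0 (by positivity)

lemma G_le_one {s : ℕ → ℕ} (hs : StrictMono s) (h0 : 1 ≤ s 0) : G s ≤ 1 := by
  have h : ∀ k, ((2:ℝ)⁻¹) ^ (s k) ≤ ((2:ℝ)⁻¹) ^ (k + 1) := by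
    intro k
    apply pow_le_pow_of_le_one (by norm_num) (by norm_num)
    have h := sm_add_le hs 0 k
    simp only [Nat.add_zero] at h
    omega
  calc G s ≤ ∑' k : ℕ, ((2:ℝ)⁻¹) ^ (k + 1) := by
        apply Summable.tsum_le_tsum h (summable_G hs)
        exact (summable_geometric_of_lt_one (by norm_num) (by norm_num)).comp_injective
          (add_left_injective 1)
    _ = 2⁻¹ * ∑' k : ℕ, ((2:ℝ)⁻¹) ^ k := by
        rw [← tsum_mul_left]; congr 1; ext k; rw [pow_succ]; ring
    _ = 1 := by rw [tsum_geometric_half]; norm_num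

/-- splitting of G at index k -/
lemma G_split {s : ℕ → ℕ} (hs : StrictMono s) (k : ℕ) :
    G s = (∑ j ∈ Finset.range k, ((2:ℝ)⁻¹) ^ (s j)) + ∑' j, ((2:ℝ)⁻¹) ^ (s (j + k)) := by
  rw [G, ← Summable.sum_add_tsum_nat_add k (summable_G hs)]

/-- main strict comparison: if `s` and `t` agree below `k` and `s k < t k`, then `G t < G s`. -/
lemma G_lt {s t : ℕ → ℕ} (hs : StrictMono s) (ht : StrictMono t) (k : ℕ)
    (hagree : ∀ j < k, s j = t j) (hk : s k < t k) : G t < G s := by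
  have hsplit_s := G_split hs k
  have hsplit_t := G_split ht k
  have hhead : (∑ j ∈ Finset.range k, ((2:ℝ)⁻¹) ^ (s j))
      = ∑ j ∈ Finset.range k, ((2:ℝ)⁻¹) ^ (t j) := by
    apply Finset.sum_congr rfl; intro j hj
    rw [hagree j (Finset.mem_range.1 hj)]
  have htail_t : ∑' j, ((2:ℝ)⁻¹) ^ (t (j + k)) ≤ ((2:ℝ)⁻¹) ^ (s k) := by
    calc ∑' j, ((2:ℝ)⁻¹) ^ (t (j + k)) ≤ ((2:ℝ)⁻¹) ^ (t k) * 2 := G_tail_le ht k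
      _ ≤ ((2:ℝ)⁻¹) ^ (s k + 1) * 2 := by
          apply mul_le_mul_of_nonneg_right _ (by norm_num)
          exact pow_le_pow_of_le_one (by norm_num) (by norm_num) hk
      _ = ((2:ℝ)⁻¹) ^ (s k) := by rw [pow_succ]; ring
  have htail_s : ((2:ℝ)⁻¹) ^ (s k) < ∑' j, ((2:ℝ)⁻¹) ^ (s (j + k)) := by
    have hsum : Summable (fun j => ((2:ℝ)⁻¹) ^ (s (j + k))) :=
      (summable_G hs).comp_injective (add_left_injective k)
    have h0 : ((2:ℝ)⁻¹) ^ (s (0 + k)) = ((2:ℝ)⁻¹) ^ (s k) := by norm_num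
    calc ((2:ℝ)⁻¹) ^ (s k) < ((2:ℝ)⁻¹) ^ (s (0+k)) + ((2:ℝ)⁻¹) ^ (s (1+k)) := by
          rw [h0]; have : (0:ℝ) < ((2:ℝ)⁻¹) ^ (s (1+k)) := by positivity
          linarith
      _ ≤ ∑' j, ((2:ℝ)⁻¹) ^ (s (j + k)) := by
          have := Summable.sum_add_tsum_nat_add 2 hsum
          have hpos : 0 ≤ ∑' j, ((2:ℝ)⁻¹) ^ (s (j + 2 + k)) :=
            tsum_nonneg (fun j => by positivity)
          have h2 : ∑ j ∈ Finset.range 2, ((2:ℝ)⁻¹) ^ (s (j + k))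
              = ((2:ℝ)⁻¹) ^ (s (0+k)) + ((2:ℝ)⁻¹) ^ (s (1+k)) := by
            simp [Finset.sum_range_succ]
          nlinarith [this, hpos, h2]
  linarith [hsplit_s, hsplit_t, hhead, htail_t, htail_s]

/-- distance estimate under agreement below n -/
lemma G_dist {s t : ℕ → ℕ} (hs : StrictMono s) (ht : StrictMono t) (n : ℕ)
    (hagree : ∀ j < n, s j = t j) : |G s - G t| ≤ ((2:ℝ)⁻¹) ^ n * 4 := by
  have hsplit_s := G_split hs n
  have hsplit_t := G_split ht n
  have hhead : (∑ j ∈ Finset.range n, ((2:ℝ)⁻¹) ^ (s j))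
      = ∑ j ∈ Finset.range n, ((2:ℝ)⁻¹) ^ (t j) := by
    apply Finset.sum_congr rfl; intro j hj
    rw [hagree j (Finset.mem_range.1 hj)]
  have hb : ∀ {u : ℕ → ℕ}, StrictMono u → ∑' j, ((2:ℝ)⁻¹) ^ (u (j + n)) ≤ ((2:ℝ)⁻¹) ^ n * 2 := by
    intro u hu
    calc ∑' j, ((2:ℝ)⁻¹) ^ (u (j + n)) ≤ ((2:ℝ)⁻¹) ^ (u n) * 2 := G_tail_le hu n
      _ ≤ ((2:ℝ)⁻¹) ^ n * 2 := by
          apply mul_le_mul_of_nonneg_right _ (by norm_num)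
          exact pow_le_pow_of_le_one (by norm_num) (by norm_num) hu.le_apply
  have h1 : 0 ≤ ∑' j, ((2:ℝ)⁻¹) ^ (s (j + n)) := tsum_nonneg (fun j => by positivity)
  have h2 : 0 ≤ ∑' j, ((2:ℝ)⁻¹) ^ (t (j + n)) := tsum_nonneg (fun j => by positivity)
  have hbs := hb hs
  have hbt := hb ht
  rw [abs_le]
  constructor <;> nlinarith



/-! ### the digit system -/

def S (x : ℕ → ℕ) : ℕ → ℕ
  | 0 => x 0 + 1
  | (k+1) => S x k + (x (k+1) + 1)

lemma S_strictMono (x : ℕ → ℕ) : StrictMono (S x) :=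
  strictMono_nat_of_lt_succ (fun n => by simp only [S]; omega)

lemma S_one_le (x : ℕ → ℕ) : 1 ≤ S x 0 := by simp [S]

lemma S_agree {x y : ℕ → ℕ} {n : ℕ} (h : ∀ k < n, x k = y k) :
    ∀ k < n, S x k = S y k := by
  intro k hk
  induction k with
  | zero => simp [S, h 0 hk]
  | succ m ih =>
      have h1 : S x m = S y m := ih (by omega)
      simp [S, h1, h (m+1) hk]

lemma S_inj : Function.Injective S := by
  intro x y h
  funext k
  induction k with
  | zero =>
      have := congrFun h 0
      simp [S] at this; omega
  | succ m ih =>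
      have h1 := congrFun h (m+1)
      have h2 := congrFun h m
      simp [S] at h1 h2
      omega

lemma S_surj {s : ℕ → ℕ} (hs : StrictMono s) (h0 : 1 ≤ s 0) : ∃ x, S x = s := by
  refine ⟨fun k => Nat.rec (s 0 - 1) (fun m _ => s (m+1) - s m - 1) k, ?_⟩
  funext k
  induction k with
  | zero => simp [S]; omega
  | succ m ih =>
      have hlt : s m < s (m+1) := hs (by omega)
      simp [S, ih]
      omega

/-! ### nxt and the greedy expansion -/

lemma exists_next {y : ℝ} (hy : 0 < y) : ∃ m, ((2:ℝ)⁻¹)^m < y :=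
  exists_pow_lt_of_lt_one hy (by norm_num)

def nxt (y : ℝ) : ℕ := if hy : 0 < y then Nat.find (exists_next hy) else 0

lemma nxt_lt {y : ℝ} (hy : 0 < y) : ((2:ℝ)⁻¹) ^ (nxt y) < y := by
  rw [nxt, dif_pos hy]; exact Nat.find_spec (exists_next hy)

lemma nxt_min {y : ℝ} (hy : 0 < y) {m : ℕ} (hm : m < nxt y) : y ≤ ((2:ℝ)⁻¹) ^ m := by
  rw [nxt, dif_pos hy] at hm
  have := Nat.find_min (exists_next hy) hm
  linarith [not_lt.1 this]

lemma nxt_one_le {y : ℝ} (hy : 0 < y) (hy1 : y ≤ 1) : 1 ≤ nxt y := by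
  by_contra h
  push_neg at h
  have h0 : nxt y = 0 := by omega
  have := nxt_lt hy; rw [h0] at this; simp at this; linarith

def Yseq (y : ℝ) : ℕ → ℝ
  | 0 => y
  | (n+1) => Yseq y n - ((2:ℝ)⁻¹) ^ (nxt (Yseq y n))

lemma Y_pos {y : ℝ} (hy : 0 < y) : ∀ n, 0 < Yseq y n := by
  intro n
  induction n with
  | zero => exact hy
  | succ m ih =>
      have := nxt_lt ih
      simp only [Yseq]; linarith

lemma Y_antitone {y : ℝ} (hy : 0 < y) {m n : ℕ} (h : m ≤ n) : Yseq y n ≤ Yseq y m := by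
  induction n with
  | zero => simp_all
  | succ k ih =>
      rcases Nat.eq_or_lt_of_le h with rfl | hlt
      · rfl
      · have h1 := ih (by omega)
        have h2 : (0:ℝ) < ((2:ℝ)⁻¹) ^ (nxt (Yseq y k)) := by positivity
        simp only [Yseq]; linarith

lemma Y_succ_le {y : ℝ} (hy : 0 < y) (hy1 : y ≤ 1) (n : ℕ) :
    Yseq y (n+1) ≤ ((2:ℝ)⁻¹) ^ (nxt (Yseq y n)) := by
  set z := Yseq y n with hz
  have hzpos : 0 < z := Y_pos hy n
  have hz1 : z ≤ 1 := le_trans (Y_antitone hy (Nat.zero_le n)) hy1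
  have h1 : 1 ≤ nxt z := nxt_one_le hzpos hz1
  have h2 : z ≤ ((2:ℝ)⁻¹) ^ (nxt z - 1) := nxt_min hzpos (by omega)
  have h3 : ((2:ℝ)⁻¹) ^ (nxt z - 1) = 2 * ((2:ℝ)⁻¹) ^ (nxt z) := by
    obtain ⟨m, hm⟩ : ∃ m, nxt z = m + 1 := ⟨nxt z - 1, by omega⟩
    rw [hm, Nat.add_sub_cancel, pow_succ]
    ring
  simp only [Yseq, ← hz]
  rw [h3] at h2
  linarith

def sOf (y : ℝ) : ℕ → ℕ := fun n => nxt (Yseq y n)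

lemma pow_half_lt_iff {a b : ℕ} (h : ((2:ℝ)⁻¹)^a < ((2:ℝ)⁻¹)^b) : b < a := by
  by_contra hc
  push_neg at hc
  have := pow_le_pow_of_le_one (by norm_num : (0:ℝ) ≤ 2⁻¹) (by norm_num) hc (a := (2:ℝ)⁻¹)
  linarith

lemma sOf_strictMono {y : ℝ} (hy : 0 < y) (hy1 : y ≤ 1) : StrictMono (sOf y) := by
  apply strictMono_nat_of_lt_succ
  intro n
  have h1 : ((2:ℝ)⁻¹) ^ (sOf y (n+1)) < Yseq y (n+1) := nxt_lt (Y_pos hy (n+1))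
  have h2 : Yseq y (n+1) ≤ ((2:ℝ)⁻¹) ^ (sOf y n) := Y_succ_le hy hy1 n
  exact pow_half_lt_iff (by linarith)

lemma Y_eq {y : ℝ} (n : ℕ) :
    Yseq y n = y - ∑ j ∈ Finset.range n, ((2:ℝ)⁻¹) ^ (sOf y j) := by
  induction n with
  | zero => simp [Yseq]
  | succ m ih =>
      simp only [Yseq, ih, Finset.sum_range_succ, sOf]
      ring

lemma G_sOf {y : ℝ} (hy : 0 < y) (hy1 : y ≤ 1) : G (sOf y) = y := by
  have hsm := sOf_strictMono hy hy1
  have hsum := summable_G hsm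
  have hbound : ∀ n, Yseq y n ≤ 2 * ((2:ℝ)⁻¹)^n := by
    intro n
    match n with
    | 0 => simpa [Yseq] using by linarith
    | (m+1) =>
        have h1 := Y_succ_le hy hy1 m
        have h2 : ((2:ℝ)⁻¹) ^ (nxt (Yseq y m)) ≤ ((2:ℝ)⁻¹) ^ m := by
          apply pow_le_pow_of_le_one (by norm_num) (by norm_num)
          exact hsm.le_apply
        calc Yseq y (m+1) ≤ ((2:ℝ)⁻¹) ^ m := le_trans h1 h2
          _ = 2 * ((2:ℝ)⁻¹)^(m+1) := by rw [pow_succ]; ring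
  have hY0 : Tendsto (Yseq y) atTop (𝓝 0) := by
    apply squeeze_zero (fun n => (Y_pos hy n).le) hbound
    have := (tendsto_pow_atTop_nhds_zero_of_lt_one
      (by norm_num : (0:ℝ) ≤ 2⁻¹) (by norm_num : (2:ℝ)⁻¹ < 1)).const_mul (2:ℝ)
    simpa using this
  have h2 : Tendsto (fun n => ∑ j ∈ Finset.range n, ((2:ℝ)⁻¹) ^ (sOf y j)) atTop (𝓝 y) := by
    have heq : (fun n => ∑ j ∈ Finset.range n, ((2:ℝ)⁻¹) ^ (sOf y j))
        = fun n => y - Yseq y n := by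
      funext n; have := Y_eq (y := y) n; linarith
    rw [heq]
    simpa using tendsto_const_nhds.sub hY0
  exact tendsto_nhds_unique hsum.hasSum.tendsto_sum_nat h2




/-! ### the gap-coding map g -/

def g (x : ℕ → ℕ) : ℝ := G (S x)

lemma g_mem (x : ℕ → ℕ) : g x ∈ Set.Ioc (0:ℝ) 1 :=
  ⟨G_pos (S_strictMono x), G_le_one (S_strictMono x) (S_one_le x)⟩

lemma g_injective : Function.Injective g := by
  intro x y h
  by_contra hxy
  have hex : ∃ k, x k ≠ y k := by
    by_contra hc; push_neg at hc; exact hxy (funext hc)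
  classical
  let k := Nat.find hex
  have hk : x k ≠ y k := Nat.find_spec hex
  have hagree : ∀ j < k, x j = y j := fun j hj => by
    by_contra hc
    exact absurd (Nat.find_le hc : k ≤ j) (by omega)
  have hSagree : ∀ j < k, S x j = S y j := S_agree hagree
  have hSk : S x k ≠ S y k := by
    match k, hagree, hSagree with
    | 0, _, _ => simp only [S]; omega
    | (m+1), ha, hsa =>
        have := hsa m (by omega)
        simp only [S]
        intro hcon
        apply hk
        omega
  have hgg : g x = g y := h
  rcases lt_or_gt_of_ne hSk with hlt | hlt
  · have := G_lt (S_strictMono x) (S_strictMono y) k hSagree hlt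
    rw [g, g] at hgg; linarith
  · have := G_lt (S_strictMono y) (S_strictMono x) k
      (fun j hj => (hSagree j hj).symm) hlt
    rw [g, g] at hgg; linarith

lemma g_surjOn : ∀ y ∈ Set.Ioc (0:ℝ) 1, ∃ x, g x = y := by
  rintro y ⟨hy, hy1⟩
  obtain ⟨x, hx⟩ := S_surj (sOf_strictMono hy hy1) (nxt_one_le hy hy1)
  exact ⟨x, by rw [g, hx]; exact G_sOf hy hy1⟩

lemma g_continuous : Continuous g := by
  rw [continuous_iff_continuousAt]
  intro x
  rw [ContinuousAt, Metric.tendsto_nhds]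
  intro ε hε
  obtain ⟨n, hn⟩ : ∃ n : ℕ, ((2:ℝ)⁻¹)^n * 4 < ε := by
    obtain ⟨n, hn⟩ := exists_pow_lt_of_lt_one (show (0:ℝ) < ε/4 by linarith)
      (by norm_num : (2:ℝ)⁻¹ < 1)
    exact ⟨n, by linarith⟩
  filter_upwards [cylinder_mem_nhds x n] with y hy
  have hagree : ∀ j < n, S y j = S x j := S_agree (fun k hk => hy k hk)
  have := G_dist (S_strictMono y) (S_strictMono x) n hagree
  rw [Real.dist_eq]
  calc |g y - g x| ≤ ((2:ℝ)⁻¹)^n * 4 := this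
    _ < ε := hn

/-! ### assembling ℝ from ℤ many copies of Ioc 0 1 -/

def zg : ℤ × (ℕ → ℕ) → ℝ := fun p => (p.1 : ℝ) + g p.2

lemma zg_continuous : Continuous zg := by
  apply Continuous.add
  · exact (continuous_of_discreteTopology (α := ℤ)).comp continuous_fst
  · exact g_continuous.comp continuous_snd

lemma zg_bijective : Function.Bijective zg := by
  constructor
  · rintro ⟨n, x⟩ ⟨m, y⟩ h
    simp only [zg] at h
    have hx := g_mem x
    have hy := g_mem y
    have hnm : n = m := by
      have h1 : (n:ℝ) - m = g y - g x := by linarith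
      have h2 : |(n:ℝ) - m| < 1 := by
        rw [h1, abs_lt]
        constructor <;> [linarith [hx.1, hx.2, hy.1, hy.2]; linarith [hx.1, hx.2, hy.1, hy.2]]
      have : ((n - m : ℤ) : ℝ) = (n:ℝ) - m := by push_cast; ring
      rw [← this] at h2
      have := Int.abs_lt_one_iff.1 (by exact_mod_cast h2)
      omega
    subst hnm
    have : g x = g y := by linarith
    rw [g_injective this]
  · intro r
    have h1 : (⌈r⌉ : ℝ) - 1 < r := by
      have := Int.ceil_lt_add_one r; linarith
    have h2 : r ≤ (⌈r⌉ : ℝ) := Int.le_ceil r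
    obtain ⟨x, hx⟩ := g_surjOn (r - ((⌈r⌉ - 1 : ℤ) : ℝ))
      ⟨by push_cast; linarith, by push_cast; linarith⟩
    exact ⟨(⌈r⌉ - 1, x), by simp only [zg, hx]; push_cast; ring⟩


section SchemePart
variable {X : Type*} [MetricSpace X]

/-- F-sigma sets -/
def Fsig (A : Set X) : Prop := ∃ C : ℕ → Set X, (∀ n, IsClosed (C n)) ∧ A = ⋃ n, C n

lemma Fsig_univ : Fsig (univ : Set X) := ⟨fun _ => univ, fun _ => isClosed_univ, (iUnion_const univ).symm⟩

lemma fsig_of_isOpen {U : Set X} (hU : IsOpen U) : Fsig U := by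
  rcases eq_empty_or_nonempty Uᶜ with hc | hc
  · have : U = univ := by simpa [compl_empty_iff] using hc
    rw [this]; exact Fsig_univ
  · refine ⟨fun n => {x | (1:ℝ)/(n+1) ≤ Metric.infDist x Uᶜ}, fun n => ?_, ?_⟩
    · exact isClosed_le continuous_const (Metric.continuous_infDist_pt _)
    · ext x
      simp only [mem_iUnion, mem_setOf_eq]
      constructor
      · rintro hx
        have hxne : x ∉ Uᶜ := by simpa using hx
        have hpos : 0 < Metric.infDist x Uᶜ := by
          rw [← hU.isClosed_compl.closure_eq] at hxne
          rw [hU.isClosed_compl.closure_eq] at hxne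
          exact (hU.isClosed_compl.notMem_iff_infDist_pos hc).1 hxne
        obtain ⟨n, hn⟩ := exists_nat_one_div_lt hpos
        exact ⟨n, le_of_lt hn⟩
      · rintro ⟨n, hn⟩
        by_contra hx
        have : x ∈ Uᶜ := hx
        have := Metric.infDist_zero_of_mem this
        rw [this] at hn
        have : (0:ℝ) < 1/(n+1) := by positivity
        linarith

lemma Fsig.inter_closed {A F : Set X} (hA : Fsig A) (hF : IsClosed F) : Fsig (A ∩ F) := by
  obtain ⟨C, hC, rfl⟩ := hA
  exact ⟨fun n => C n ∩ F, fun n => (hC n).inter hF, by rw [iUnion_inter]⟩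

lemma Fsig.closed_inter_open {F U : Set X} (hF : IsClosed F) (hU : IsOpen U) :
    Fsig (F ∩ U) := by
  have := (fsig_of_isOpen hU).inter_closed hF
  rwa [inter_comm] at this

/-! ### The splitting lemma -/

variable [TopologicalSpace.SeparableSpace X] [Nonempty X]

/-- Split an F-sigma set into countably many F-sigma pieces of diameter ≤ ε whose closures
are contained in the original set. -/
lemma exists_split {A : Set X} (hA : Fsig A) {ε : ℝ} (hε : 0 < ε) :
    ∃ a : ℕ → Set X,
      (⋃ j, a j) = A ∧
      (∀ j j', j ≠ j' → Disjoint (a j) (a j')) ∧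
      (∀ j, Fsig (a j)) ∧
      (∀ j, ∀ p ∈ a j, ∀ q ∈ a j, dist p q ≤ ε) ∧
      (∀ j, closure (a j) ⊆ A) := by
  classical
  obtain ⟨C, hC, rfl⟩ := hA
  -- increasing closed hulls with F 0 = ∅
  set F : ℕ → Set X := fun k => ⋃ i ∈ Finset.range k, C i with hF
  have hFclosed : ∀ k, IsClosed (F k) := fun k => isClosed_biUnion_finset (fun i _ => hC i)
  have hFmono : ∀ {k k'}, k ≤ k' → F k ⊆ F k' := by
    intro k k' hk x hx
    simp only [hF, mem_iUnion, Finset.mem_range] at hx ⊢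
    obtain ⟨i, hi, hxi⟩ := hx
    exact ⟨i, by omega, hxi⟩
  obtain ⟨u, hu⟩ := TopologicalSpace.exists_dense_seq X
  set D : ℕ → Set X := fun m => Metric.closedBall (u m) (ε/2) with hD
  have hDcover : ∀ x : X, ∃ m, x ∈ D m := by
    intro x
    obtain ⟨m, hm⟩ := hu.exists_dist_lt x (half_pos hε)
    exact ⟨m, by simpa [hD, Metric.mem_closedBall, dist_comm] using hm.le⟩
  set D' : ℕ → Set X := fun m => ⋃ i ∈ Finset.range m, D i with hD'
  have hD'closed : ∀ m, IsClosed (D' m) :=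
    fun m => isClosed_biUnion_finset (fun i _ => Metric.isClosed_closedBall)
  set P : ℕ × ℕ → Set X := fun p =>
    ((F (p.1+1) ∩ D p.2) \ (F p.1 ∪ D' p.2)) with hP
  have hPsubA : ∀ p, P p ⊆ ⋃ n, C n := by
    rintro ⟨k, m⟩ x hx
    have : x ∈ F (k+1) := hx.1.1
    simp only [hF, mem_iUnion, Finset.mem_range] at this
    obtain ⟨i, _, hi⟩ := this
    exact mem_iUnion.2 ⟨i, hi⟩
  obtain ⟨e, he⟩ : ∃ e : ℕ ≃ ℕ × ℕ, True := ⟨(Denumerable.eqv (ℕ × ℕ)).symm, trivial⟩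
  refine ⟨fun j => P (e j), ?_, ?_, ?_, ?_, ?_⟩
  · -- union
    rw [e.surjective.iUnion_comp (g := P)]
    apply Subset.antisymm
    · exact iUnion_subset hPsubA
    · intro x hx
      have hxF : ∃ k, x ∈ F (k+1) := by
        simp only [mem_iUnion] at hx
        obtain ⟨n, hn⟩ := hx
        exact ⟨n, by
          simp only [hF, mem_iUnion, Finset.mem_range]
          exact ⟨n, by omega, hn⟩⟩
      classical
      obtain ⟨k, hk, hkmin⟩ : ∃ k, x ∈ F (k+1) ∧ ∀ k' < k, x ∉ F (k'+1) := by
        have := Nat.find_spec hxF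
        exact ⟨Nat.find hxF, this, fun k' hk' => Nat.find_min hxF hk'⟩
      obtain ⟨m, hm, hmmin⟩ : ∃ m, x ∈ D m ∧ ∀ m' < m, x ∉ D m' := by
        have hex := hDcover x
        have := Nat.find_spec hex
        exact ⟨Nat.find hex, this, fun m' hm' => Nat.find_min hex hm'⟩
      refine mem_iUnion.2 ⟨(k, m), ⟨⟨hk, hm⟩, ?_⟩⟩
      rintro (hx1 | hx2)
      · rcases Nat.eq_zero_or_pos k with rfl | hkpos
        · simp [hF] at hx1
        · exact hkmin (k-1) (by omega) (by
            have : F k ⊆ F ((k-1)+1) := hFmono (by omega)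
            exact this hx1)
      · simp only [hD', mem_iUnion, Finset.mem_range] at hx2
        obtain ⟨i, hi, hxi⟩ := hx2
        exact hmmin i hi hxi
  · -- disjoint
    intro j j' hjj'
    have hne : e j ≠ e j' := fun hc => hjj' (e.injective hc)
    set p := e j with hp
    set q := e j' with hq
    rw [Set.disjoint_left]
    intro x hxp hxq
    rcases Nat.lt_trichotomy p.1 q.1 with h1 | h1 | h1
    · exact hxq.2 (Or.inl (hFmono (by omega : p.1 + 1 ≤ q.1) hxp.1.1))
    · have h2 : p.2 ≠ q.2 := fun hc => hne (Prod.ext h1 hc)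
      rcases Nat.lt_trichotomy p.2 q.2 with h3 | h3 | h3
      · exact hxq.2 (Or.inr (by
          simp only [hD', mem_iUnion, Finset.mem_range]
          exact ⟨p.2, h3, hxp.1.2⟩))
      · exact h2 h3
      · exact hxp.2 (Or.inr (by
          simp only [hD', mem_iUnion, Finset.mem_range]
          exact ⟨q.2, h3, hxq.1.2⟩))
    · exact hxp.2 (Or.inl (hFmono (by omega : q.1 + 1 ≤ p.1) hxq.1.1))
  · -- Fsig
    intro j
    have h1 : IsClosed (F ((e j).1+1) ∩ D (e j).2) :=
      (hFclosed _).inter Metric.isClosed_closedBall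
    have h2 : IsOpen (F (e j).1 ∪ D' (e j).2)ᶜ :=
      ((hFclosed _).union (hD'closed _)).isOpen_compl
    show Fsig ((F ((e j).1+1) ∩ D (e j).2) \ (F (e j).1 ∪ D' (e j).2))
    rw [Set.diff_eq]
    exact Fsig.closed_inter_open h1 h2
  · -- diam
    intro j x hx y hy
    have hx2 : x ∈ D (e j).2 := hx.1.2
    have hy2 : y ∈ D (e j).2 := hy.1.2
    rw [hD, Metric.mem_closedBall] at hx2 hy2
    calc dist x y ≤ dist x (u (e j).2) + dist (u (e j).2) y := dist_triangle _ _ _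
      _ ≤ ε/2 + ε/2 := by rw [dist_comm (u (e j).2) y]; exact add_le_add hx2 hy2
      _ = ε := by ring
  · -- closure
    intro j
    have hclosed : IsClosed (F ((e j).1+1) ∩ D (e j).2) :=
      (hFclosed _).inter Metric.isClosed_closedBall
    have hsub : P (e j) ⊆ F ((e j).1+1) ∩ D (e j).2 := fun x hx => hx.1
    have h1 : closure (P (e j)) ⊆ F ((e j).1+1) ∩ D (e j).2 :=
      hclosed.closure_subset_iff.2 hsub
    intro x hx
    have hxF : x ∈ F ((e j).1+1) := (h1 hx).1
    simp only [hF, mem_iUnion, Finset.mem_range] at hxF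
    obtain ⟨i, _, hi⟩ := hxF
    exact mem_iUnion.2 ⟨i, hi⟩


/-! ### The Luzin scheme -/

variable (X) in
structure PNode where
  A : Set X
  u : List ℕ
  hF : Fsig A
  hne : A.Nonempty

def nodeSplit (v : PNode X) : ℕ → Set X :=
  (exists_split v.hF (show (0:ℝ) < (2:ℝ)⁻¹ ^ v.u.length by positivity)).choose

lemma nodeSplit_spec (v : PNode X) :
    (⋃ j, nodeSplit v j) = v.A ∧
    (∀ j j', j ≠ j' → Disjoint (nodeSplit v j) (nodeSplit v j')) ∧
    (∀ j, Fsig (nodeSplit v j)) ∧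
    (∀ j, ∀ p ∈ nodeSplit v j, ∀ q ∈ nodeSplit v j, dist p q ≤ (2:ℝ)⁻¹ ^ v.u.length) ∧
    (∀ j, closure (nodeSplit v j) ⊆ v.A) :=
  (exists_split v.hF (show (0:ℝ) < (2:ℝ)⁻¹ ^ v.u.length by positivity)).choose_spec

def nodeJ (v : PNode X) : Set ℕ := {j | (nodeSplit v j).Nonempty}

lemma nodeJ_nonempty (v : PNode X) : (nodeJ v).Nonempty := by
  obtain ⟨x, hx⟩ := v.hne
  rw [← (nodeSplit_spec v).1] at hx
  obtain ⟨j, hj⟩ := mem_iUnion.1 hx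
  exact ⟨j, ⟨x, hj⟩⟩

def nodeE (v : PNode X) : ℕ ≃ (↥(nodeJ v) × ℕ) := by
  have : Nonempty ↥(nodeJ v) := (nodeJ_nonempty v).to_subtype
  have : Infinite (↥(nodeJ v) × ℕ) := by
    have : Nonempty ↥(nodeJ v) := (nodeJ_nonempty v).to_subtype
    infer_instance
  exact Classical.choice (by
    obtain ⟨d⟩ := (nonempty_denumerable_iff (α := ↥(nodeJ v) × ℕ)).2 ⟨inferInstance, inferInstance⟩
    exact ⟨(Denumerable.eqv _).symm⟩)

def child (v : PNode X) (m : ℕ) : PNode X where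
  A := nodeSplit v ((nodeE v m).1 : ℕ)
  u := v.u ++ [(nodeE v m).2]
  hF := (nodeSplit_spec v).2.2.1 _
  hne := (nodeE v m).1.2

def node : List ℕ → PNode X
  | [] => ⟨univ, [], Fsig_univ, univ_nonempty⟩
  | (m :: t) => child (node t) m

lemma node_u_length : ∀ t : List ℕ, (node (X := X) t).u.length = t.length
  | [] => rfl
  | (m :: t) => by
      show ((node t).u ++ [(nodeE (node t) m).2]).length = t.length + 1
      rw [List.length_append, node_u_length t]
      simp

lemma child_closure (v : PNode X) (m : ℕ) : closure (child v m).A ⊆ v.A :=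
  (nodeSplit_spec v).2.2.2.2 _

lemma child_subset (v : PNode X) (m : ℕ) : (child v m).A ⊆ v.A :=
  subset_closure.trans (child_closure v m)

lemma child_diam (v : PNode X) (m : ℕ) :
    ∀ p ∈ (child v m).A, ∀ q ∈ (child v m).A, dist p q ≤ (2:ℝ)⁻¹ ^ v.u.length :=
  (nodeSplit_spec v).2.2.2.1 _

lemma child_u (v : PNode X) (m : ℕ) : (child v m).u = v.u ++ [(nodeE v m).2] := rfl

/-! ### branches -/

def addr (x : ℕ → ℕ) : ℕ → List ℕ
  | 0 => []
  | (n+1) => x n :: addr x n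

lemma addr_length (x : ℕ → ℕ) : ∀ n, (addr x n).length = n
  | 0 => rfl
  | (n+1) => by show (addr x n).length + 1 = n + 1; rw [addr_length x n]

lemma addr_agree {x y : ℕ → ℕ} : ∀ {n}, (∀ k < n, y k = x k) → addr y n = addr x n
  | 0, _ => rfl
  | (n+1), h => by
      show y n :: addr y n = x n :: addr x n
      rw [h n (by omega), addr_agree (fun k hk => h k (by omega))]

lemma node_addr_mono (x : ℕ → ℕ) {n n' : ℕ} (h : n ≤ n') :
    (node (X := X) (addr x n')).A ⊆ (node (addr x n)).A := by
  induction n' with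
  | zero => have : n = 0 := by omega
            subst this; exact fun a ha => ha
  | succ k ih =>
      rcases Nat.eq_or_lt_of_le h with rfl | hlt
      · exact fun a ha => ha
      · exact (child_subset (node (addr x k)) (x k)).trans (ih (by omega))

variable [CompleteSpace X]

lemma exists_limX (x : ℕ → ℕ) : ∃ l : X, ∀ n, l ∈ (node (addr x n)).A := by
  classical
  set p : ℕ → X := fun n => (node (X := X) (addr x n)).hne.some with hp
  have hmem : ∀ n, p n ∈ (node (addr x n)).A := fun n => (node (addr x n)).hne.some_mem
  have hdist : ∀ {n m : ℕ}, 1 ≤ n → n ≤ m → dist (p m) (p n) ≤ (2:ℝ)⁻¹ ^ (n - 1) := by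
    intro n m h1 hnm
    obtain ⟨k, rfl⟩ : ∃ k, n = k + 1 := ⟨n - 1, by omega⟩
    have h2 : p m ∈ (node (addr x (k+1))).A := node_addr_mono x hnm (hmem m)
    have h3 := child_diam (node (addr x k)) (x k) _ h2 _ (hmem (k+1))
    rw [node_u_length, addr_length] at h3
    simpa using h3
  have hcauchy : CauchySeq p := by
    rw [Metric.cauchySeq_iff']
    intro ε hε
    obtain ⟨N, hN⟩ := exists_pow_lt_of_lt_one hε (by norm_num : (2:ℝ)⁻¹ < 1)
    refine ⟨N + 1, fun n hn => ?_⟩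
    calc dist (p n) (p (N+1)) ≤ (2:ℝ)⁻¹ ^ (N + 1 - 1) := hdist (by omega) hn
      _ = (2:ℝ)⁻¹ ^ N := by norm_num
      _ < ε := hN
  obtain ⟨l, hl⟩ := cauchySeq_tendsto_of_complete hcauchy
  refine ⟨l, fun n => ?_⟩
  have h1 : ∀ᶠ m in atTop, p m ∈ (node (addr x (n+1))).A := by
    filter_upwards [eventually_ge_atTop (n+1)] with m hm
    exact node_addr_mono x hm (hmem m)
  have h2 : l ∈ closure (node (addr x (n+1))).A := mem_closure_of_tendsto hl h1
  exact child_closure (node (addr x n)) (x n) h2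

lemma limX_unique {x : ℕ → ℕ} {l l' : X} (hl : ∀ n, l ∈ (node (addr x n)).A)
    (hl' : ∀ n, l' ∈ (node (addr x n)).A) : l = l' := by
  by_contra hne
  have hd : 0 < dist l l' := dist_pos.2 hne
  obtain ⟨N, hN⟩ := exists_pow_lt_of_lt_one hd (by norm_num : (2:ℝ)⁻¹ < 1)
  have := child_diam (node (addr x N)) (x N) _ (hl (N+1)) _ (hl' (N+1))
  rw [node_u_length, addr_length] at this
  linarith

def limX (x : ℕ → ℕ) : X := (exists_limX (X := X) x).choose

lemma limX_mem (x : ℕ → ℕ) (n : ℕ) : limX (X := X) x ∈ (node (addr x n)).A :=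
  (exists_limX x).choose_spec n

variable (X) in
def limN (x : ℕ → ℕ) : ℕ → ℕ := fun n => (nodeE (node (X := X) (addr x n)) (x n)).2

lemma node_addr_u (x : ℕ → ℕ) :
    ∀ n, (node (X := X) (addr x n)).u = (List.range n).map (limN X x)
  | 0 => rfl
  | (n+1) => by
      show (child (node (addr x n)) (x n)).u = _
      rw [child_u, node_addr_u x n, List.range_succ, List.map_append]
      rfl

def KMap : (ℕ → ℕ) → X × (ℕ → ℕ) := fun x => (limX x, limN X x)


lemma KMap_injective : Function.Injective (KMap (X := X)) := by
  intro x y h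
  by_contra hxy
  have hex : ∃ n, x n ≠ y n := by
    by_contra hc; push_neg at hc; exact hxy (funext hc)
  classical
  set n := Nat.find hex with hn
  have hkn : x n ≠ y n := Nat.find_spec hex
  have hagree : ∀ k < n, y k = x k := fun k hk => by
    by_contra hc
    exact absurd (Nat.find_le (fun hc' => hc hc'.symm) : n ≤ k) (by omega)
  have haddr : addr y n = addr x n := addr_agree hagree
  set v := node (X := X) (addr x n) with hv
  have hx1 : limX (X := X) x ∈ (child v (x n)).A := limX_mem (X := X) x (n+1)
  have hy1 : limX (X := X) y ∈ (child v (y n)).A := by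
    have := limX_mem (X := X) y (n+1)
    show limX (X := X) y ∈ (child (node (addr x n)) (y n)).A
    rw [← haddr]
    exact this
  have hXeq : limX (X := X) x = limX (X := X) y := congrArg Prod.fst h
  by_cases hj : ((nodeE v (x n)).1 : ℕ) = ((nodeE v (y n)).1 : ℕ)
  · -- same piece: letters must differ
    have hletter : (nodeE v (x n)).2 ≠ (nodeE v (y n)).2 := by
      intro hc
      apply hkn
      apply (nodeE v).injective
      exact Prod.ext (Subtype.ext hj) hc
    have hNeq : limN X x = limN X y := congrArg Prod.snd h
    apply hletter
    have h1 : limN X x n = (nodeE v (x n)).2 := rfl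
    have h2 : limN X y n = (nodeE v (y n)).2 := by
      show (nodeE (node (addr y n)) (y n)).2 = _
      rw [haddr]
    rw [← h1, ← h2, hNeq]
  · -- different pieces: disjoint
    have hdisj := (nodeSplit_spec v).2.1 _ _ hj
    rw [Set.disjoint_left] at hdisj
    exact hdisj hx1 (hXeq ▸ hy1)

lemma exists_child_mem (v : PNode X) {pt : X} (hpt : pt ∈ v.A) (k : ℕ) :
    ∃ m, pt ∈ (child v m).A ∧ (nodeE v m).2 = k := by
  have hcov := (nodeSplit_spec v).1
  rw [← hcov] at hpt
  obtain ⟨j, hj⟩ := mem_iUnion.1 hpt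
  have hjJ : j ∈ nodeJ v := ⟨pt, hj⟩
  refine ⟨(nodeE v).symm (⟨j, hjJ⟩, k), ?_, ?_⟩
  · show pt ∈ nodeSplit v (((nodeE v ((nodeE v).symm (⟨j, hjJ⟩, k))).1 : ℕ))
    rw [Equiv.apply_symm_apply]
    exact hj
  · rw [Equiv.apply_symm_apply]

def branchAux (pt : X) (z : ℕ → ℕ) : (n : ℕ) →
    {t : List ℕ // pt ∈ (node (X := X) t).A}
  | 0 => ⟨[], mem_univ pt⟩
  | (n+1) =>
      ⟨(exists_child_mem (node (branchAux pt z n).1) (branchAux pt z n).2 (z n)).choose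
          :: (branchAux pt z n).1,
        (exists_child_mem (node (branchAux pt z n).1) (branchAux pt z n).2 (z n)).choose_spec.1⟩

def branchX (pt : X) (z : ℕ → ℕ) : ℕ → ℕ := fun n => ((branchAux (X := X) pt z (n+1)).1).headI

lemma branch_addr (pt : X) (z : ℕ → ℕ) :
    ∀ n, addr (branchX (X := X) pt z) n = (branchAux (X := X) pt z n).1
  | 0 => rfl
  | (n+1) => by
      show branchX (X := X) pt z n :: addr (branchX (X := X) pt z) n = _
      rw [branch_addr pt z n]
      rfl

lemma KMap_surjective : Function.Surjective (KMap (X := X)) := by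
  rintro ⟨pt, z⟩
  refine ⟨branchX (X := X) pt z, ?_⟩
  have hmem : ∀ n, pt ∈ (node (X := X) (addr (branchX (X := X) pt z) n)).A := fun n => by
    rw [branch_addr]; exact (branchAux pt z n).2
  have hX : limX (X := X) (branchX (X := X) pt z) = pt :=
    limX_unique (limX_mem (X := X) _) hmem
  have hN : limN X (branchX (X := X) pt z) = z := by
    funext n
    show (nodeE (node (addr (branchX (X := X) pt z) n)) (branchX (X := X) pt z n)).2 = z n
    rw [branch_addr pt z n]
    show (nodeE (node (branchAux (X := X) pt z n).1) ((branchAux (X := X) pt z (n+1)).1).headI).2 = z n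
    have hh : ((branchAux (X := X) pt z (n+1)).1).headI
        = (exists_child_mem (node (branchAux (X := X) pt z n).1)
            (branchAux (X := X) pt z n).2 (z n)).choose := rfl
    rw [hh]
    exact (exists_child_mem (node (branchAux (X := X) pt z n).1)
      (branchAux (X := X) pt z n).2 (z n)).choose_spec.2
  show (limX (X := X) (branchX (X := X) pt z), limN X (branchX (X := X) pt z)) = (pt, z)
  rw [hX, hN]

lemma KMap_continuous : Continuous (KMap (X := X)) := by
  apply Continuous.prodMk
  · rw [continuous_iff_continuousAt]
    intro x
    rw [ContinuousAt, Metric.tendsto_nhds]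
    intro ε hε
    obtain ⟨N, hN⟩ := exists_pow_lt_of_lt_one hε (by norm_num : (2:ℝ)⁻¹ < 1)
    filter_upwards [cylinder_mem_nhds x (N+1)] with y hy
    have haddr : addr y (N+1) = addr x (N+1) := addr_agree hy
    have h1 : limX (X := X) y ∈ (node (addr x (N+1))).A := by
      rw [← haddr]; exact limX_mem (X := X) y (N+1)
    have h2 : limX (X := X) x ∈ (node (addr x (N+1))).A := limX_mem (X := X) x (N+1)
    have h3 := child_diam (node (addr x N)) (x N) _ h1 _ h2
    rw [node_u_length, addr_length] at h3
    calc dist (limX (X := X) y) (limX (X := X) x) ≤ (2:ℝ)⁻¹ ^ N := h3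
      _ < ε := hN
  · apply continuous_pi
    intro n
    rw [continuous_iff_continuousAt]
    intro x
    have hev : ∀ᶠ y in 𝓝 x, limN X y n = limN X x n := by
      filter_upwards [cylinder_mem_nhds x (n+1)] with y hy
      have haddr : addr y n = addr x n := addr_agree (fun k hk => hy k (by omega))
      show (nodeE (node (addr y n)) (y n)).2 = (nodeE (node (addr x n)) (x n)).2
      rw [haddr, hy n (by omega)]
    exact Filter.Tendsto.congr' (by filter_upwards [hev] with y hy; exact hy.symm)
      tendsto_const_nhds

theorem lemmaK : ∃ K : (ℕ → ℕ) → X × (ℕ → ℕ), Continuous K ∧ Function.Bijective K :=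
  ⟨KMap, KMap_continuous, KMap_injective, KMap_surjective⟩

theorem lemmaK_polish (Y : Type) [TopologicalSpace Y] [PolishSpace Y] [Nonempty Y] :
    ∃ K : (ℕ → ℕ) → Y × (ℕ → ℕ), Continuous K ∧ Function.Bijective K := by
  letI := TopologicalSpace.upgradeIsCompletelyMetrizable Y
  exact lemmaK


end SchemePart
/-! ### interleaving pairing -/


def pair (w : NN × NN) : NN := fun k => if k % 2 = 0 then w.1 (k / 2) else w.2 (k / 2)

def ev (y : NN) : NN := fun m => y (2 * m)
def od (y : NN) : NN := fun m => y (2 * m + 1)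

lemma ev_pair (w : NN × NN) : ev (pair w) = w.1 := by
  funext m; simp only [ev, pair]
  rw [if_pos (by omega)]
  have h : 2 * m / 2 = m := by omega
  rw [h]

lemma od_pair (w : NN × NN) : od (pair w) = w.2 := by
  funext m; simp only [od, pair]
  rw [if_neg (by omega)]
  have h : (2 * m + 1) / 2 = m := by omega
  rw [h]

lemma pair_ev_od (y : NN) : pair (ev y, od y) = y := by
  funext k
  simp only [pair, ev, od]
  by_cases h : k % 2 = 0
  · rw [if_pos h]
    have h2 : 2 * (k / 2) = k := by omega
    rw [h2]
  · rw [if_neg h]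
    have h2 : 2 * (k / 2) + 1 = k := by omega
    rw [h2]

lemma pair_injective : Function.Injective pair := by
  intro w w' h
  have h1 := congrArg ev h
  have h2 := congrArg od h
  rw [ev_pair, ev_pair] at h1
  rw [od_pair, od_pair] at h2
  exact Prod.ext h1 h2

lemma pair_continuous : Continuous pair := by
  apply continuous_pi
  intro k
  by_cases h : k % 2 = 0
  · simp only [pair, h, if_true]
    exact (continuous_apply (k / 2)).comp continuous_fst
  · simp only [pair, h, if_false]
    exact (continuous_apply (k / 2)).comp continuous_snd

lemma continuous_ev : Continuous ev :=
  continuous_pi (fun m => continuous_apply (2 * m))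
lemma continuous_od : Continuous od :=
  continuous_pi (fun m => continuous_apply (2 * m + 1))

/-! ### uncountability of ℕ → ℕ -/

lemma not_countable_NN : ¬ Countable NN := by
  intro h
  have hinj : Function.Injective (fun (f : ℕ → Bool) (n : ℕ) => if f n then 1 else 0) := by
    intro f g hfg
    funext n
    have := congrFun hfg n
    by_cases hf : f n <;> by_cases hg : g n <;> simp [hf, hg] at this ⊢
  haveI : Countable (ℕ → Bool) := hinj.countable
  obtain ⟨f, hf⟩ := Countable.exists_injective_nat (ℕ → Bool)
  have hs : Function.Surjective (Function.invFun f) := Function.invFun_surjective hf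
  obtain ⟨g, hg⟩ : ∃ g : ℕ → (ℕ → Bool), Function.Surjective g := ⟨_, hs⟩
  -- Cantor diagonal
  have : ∃ n, g n = (fun n => ! g n n) := hg _
  obtain ⟨n, hn⟩ := this
  have := congrFun hn n
  simp at this


/-! ### the lambda family -/

theorem exists_lambda_family {α : Type*} (B : α → Set ℝ)
    (hdisj : ∀ i j, i ≠ j → Disjoint (B i) (B j))
    (hne : ∀ i, (B i).Nonempty)
    (hBorel : ∀ i, MeasurableSet (B i))
    (hcover : ⋃ i, B i = univ) :
    ∃ lam : α → NN → NN,
      (∀ i, Continuous (lam i)) ∧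
      (∀ i, Function.Injective (lam i)) ∧
      (∀ i j, i ≠ j → Disjoint (range (lam i)) (range (lam j))) ∧
      (⋃ i, range (lam i)) = univ := by
  classical
  have hR : ¬ Countable ℝ := by
    rw [← countable_univ_iff]
    exact Cardinal.not_countable_real
  obtain ⟨ψ⟩ : Nonempty (ℝ ≃ᵐ NN) :=
    ⟨PolishSpace.measurableEquivOfNotCountable hR not_countable_NN⟩
  -- package each piece into a Polish space with a continuous injection into ℝ
  have hpiece : ∀ i, ∃ (Z : Type) (tZ : TopologicalSpace Z),
      @PolishSpace Z tZ ∧ Nonempty Z ∧ ∃ emb : Z → ℝ,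
      Function.Injective emb ∧ range emb = B i ∧
      @Continuous Z NN tZ _ (fun z => ψ (emb z)) := by
    intro i
    obtain ⟨t1, ht1le, ht1pol, ht1closed, ht1open⟩ := (hBorel i).isClopenable
    have hbs1 : @BorelSpace ℝ t1 (inferInstance : MeasurableSpace ℝ) := by
      constructor
      rw [@MeasureTheory.borel_eq_borel_of_le ℝ t1 (@UniformSpace.toTopologicalSpace ℝ _) ht1pol inferInstance ht1le]
      exact BorelSpace.measurable_eq
    obtain ⟨t2, ht2le, ht2cont, ht2pol⟩ :=
      @Measurable.exists_continuous ℝ NN t1 ht1pol _ hbs1 _ _ _ ψ _ ψ.measurable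
    have ht2closed : IsClosed[t2] (B i) := by
      rw [← @isOpen_compl_iff ℝ _ t2]
      rw [← @isOpen_compl_iff ℝ _ t1] at ht1closed
      exact ht2le _ ht1closed
    refine ⟨↥(B i), @instTopologicalSpaceSubtype ℝ (· ∈ B i) t2, ?_, (hne i).to_subtype,
      Subtype.val, Subtype.val_injective, Subtype.range_val, ?_⟩
    · exact @IsClosed.polishSpace ℝ t2 ht2pol (B i) ht2closed
    · exact ht2cont.comp (@continuous_subtype_val ℝ t2 (· ∈ B i))
  choose Z tZ pZ neZ emb hembinj hembrange hembψ using hpiece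
  -- Lemma K for each piece
  have hK : ∀ i, ∃ K : NN → (Z i) × NN,
      @Continuous NN ((Z i) × NN) _ (@instTopologicalSpaceProd _ _ (tZ i) _) K ∧
      Function.Bijective K := by
    intro i
    letI := tZ i
    haveI := pZ i
    haveI := neZ i
    exact lemmaK_polish (Z i)
  choose K hKcont hKbij using hK
  set lam : α → NN → NN := fun i v => pair (ψ (emb i (K i v).1), (K i v).2) with hlam
  have hrange : ∀ i, range (lam i) = pair '' ((ψ '' (B i)) ×ˢ (univ : Set NN)) := by
    intro i
    ext y
    constructor
    · rintro ⟨v, rfl⟩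
      exact ⟨(ψ (emb i (K i v).1), (K i v).2),
        ⟨⟨emb i (K i v).1, by rw [← hembrange i]; exact mem_range_self _, rfl⟩, trivial⟩, rfl⟩
    · rintro ⟨⟨w1, w2⟩, ⟨⟨b, hb, rfl⟩, -⟩, rfl⟩
      rw [← hembrange i] at hb
      obtain ⟨z, rfl⟩ := hb
      obtain ⟨v, hv⟩ := (hKbij i).2 (z, w2)
      exact ⟨v, by rw [hlam]; simp only; rw [hv]⟩
  refine ⟨lam, ?_, ?_, ?_, ?_⟩
  · intro i
    apply pair_continuous.comp
    have cfst : @Continuous ((Z i) × NN) (Z i) (@instTopologicalSpaceProd _ _ (tZ i) _) (tZ i)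
        Prod.fst := @continuous_fst _ _ (tZ i) _
    have csnd : @Continuous ((Z i) × NN) NN (@instTopologicalSpaceProd _ _ (tZ i) _) _
        Prod.snd := @continuous_snd _ _ (tZ i) _
    exact Continuous.prodMk (((hembψ i).comp cfst).comp (hKcont i)) (csnd.comp (hKcont i))
  · intro i v v' hvv'
    have h1 := congrArg ev hvv'
    have h2 := congrArg od hvv'
    rw [hlam] at h1 h2
    simp only [ev_pair, od_pair] at h1 h2
    have hb : (K i v).1 = (K i v').1 := hembinj i (ψ.injective h1)
    exact (hKbij i).1 (Prod.ext hb h2)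
  · intro i j hij
    rw [Set.disjoint_left]
    rintro y hyi hyj
    rw [hrange i] at hyi
    rw [hrange j] at hyj
    obtain ⟨⟨w1, w2⟩, ⟨⟨b, hb, rfl⟩, -⟩, rfl⟩ := hyi
    obtain ⟨⟨w1', w2'⟩, ⟨⟨b', hb', hbe⟩, -⟩, hpair⟩ := hyj
    have h1 := congrArg ev hpair
    rw [ev_pair, ev_pair] at h1
    have : b' = b := ψ.injective (by rw [hbe, h1])
    subst this
    exact Set.disjoint_left.1 (hdisj i j hij) hb hb'
  · apply Subset.antisymm (subset_univ _)
    intro y _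
    have : ψ.symm (ev y) ∈ ⋃ i, B i := by rw [hcover]; trivial
    obtain ⟨i, hi⟩ := mem_iUnion.1 this
    rw [mem_iUnion]
    refine ⟨i, ?_⟩
    rw [hrange i]
    refine ⟨(ev y, od y), ⟨⟨ψ.symm (ev y), hi, by simp⟩, trivial⟩, pair_ev_od y⟩


universe u

section Braid
variable {α : Type u}

def shiftW : (ℕ → α) × (ℕ → NN) → (ℕ → α) × (ℕ → NN) :=
  fun w => (fun n => w.1 (n+1), fun n => w.2 (n+1))

variable (lam : α → NN → NN)

def Phi : (ℕ → α) × (ℕ → NN) → ℕ → ℕ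
  | w, k =>
    if k % 2 = 0 then lam (w.1 0) (w.2 0) (k / 2)
    else Phi (shiftW w) (k / 2)
  termination_by w k => k
  decreasing_by omega

lemma Phi_even (w : (ℕ → α) × (ℕ → NN)) (m : ℕ) :
    Phi lam w (2*m) = lam (w.1 0) (w.2 0) m := by
  rw [Phi]
  rw [if_pos (by omega)]
  congr 1
  omega

lemma Phi_odd (w : (ℕ → α) × (ℕ → NN)) (m : ℕ) :
    Phi lam w (2*m+1) = Phi lam (shiftW w) m := by
  rw [Phi]
  rw [if_neg (by omega)]
  congr 1
  omega

lemma ev_Phi (w : (ℕ → α) × (ℕ → NN)) : ev (Phi lam w) = lam (w.1 0) (w.2 0) := by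
  funext m; exact Phi_even lam w m

lemma od_Phi (w : (ℕ → α) × (ℕ → NN)) : od (Phi lam w) = Phi lam (shiftW w) := by
  funext m; exact Phi_odd lam w m

lemma shiftW_iterate (n : ℕ) (w : (ℕ → α) × (ℕ → NN)) :
    shiftW^[n] w = (fun m => w.1 (m+n), fun m => w.2 (m+n)) := by
  induction n generalizing w with
  | zero => simp
  | succ k ih =>
      rw [Function.iterate_succ_apply, ih]
      refine Prod.ext (funext fun m => ?_) (funext fun m => ?_)
      · show (shiftW w).1 (m + k) = w.1 (m + (k+1))
        simp only [shiftW]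
        congr 1
      · show (shiftW w).2 (m + k) = w.2 (m + (k+1))
        simp only [shiftW]
        congr 1

lemma od_iterate_Phi (n : ℕ) (w : (ℕ → α) × (ℕ → NN)) :
    od^[n] (Phi lam w) = Phi lam (shiftW^[n] w) := by
  induction n generalizing w with
  | zero => simp
  | succ k ih =>
      rw [Function.iterate_succ_apply, od_Phi, ih, Function.iterate_succ_apply]

section Topo
variable [TopologicalSpace α] [DiscreteTopology α]

lemma shiftW_continuous : Continuous (shiftW (α := α)) := by
  apply Continuous.prodMk
  · exact continuous_pi (fun n => (continuous_apply (n+1)).comp continuous_fst)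
  · exact continuous_pi (fun n => (continuous_apply (n+1)).comp continuous_snd)

lemma Phi_continuous (hlam : ∀ i, Continuous (lam i)) : Continuous (Phi lam) := by
  apply continuous_pi
  intro k
  induction k using Nat.strong_induction_on with
  | _ k IH =>
    by_cases hk : k % 2 = 0
    · obtain ⟨m, rfl⟩ : ∃ m, k = 2*m := ⟨k/2, by omega⟩
      rw [continuous_iff_continuousAt]
      intro w₀
      have hnb : {w : (ℕ → α) × (ℕ → NN) | w.1 0 = w₀.1 0} ∈ 𝓝 w₀ := by
        have hopen : IsOpen {w : (ℕ → α) × (ℕ → NN) | w.1 0 = w₀.1 0} := by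
          have : {w : (ℕ → α) × (ℕ → NN) | w.1 0 = w₀.1 0}
              = (fun w : (ℕ → α) × (ℕ → NN) => w.1 0) ⁻¹' {w₀.1 0} := rfl
          rw [this]
          exact ((continuous_apply 0).comp continuous_fst).isOpen_preimage _
            (isOpen_discrete _)
        exact hopen.mem_nhds rfl
      have hev : (fun w : (ℕ → α) × (ℕ → NN) => Phi lam w (2*m))
          =ᶠ[𝓝 w₀] (fun w => lam (w₀.1 0) (w.2 0) m) := by
        filter_upwards [hnb] with w hw
        rw [Phi_even, hw]
      have cg : ContinuousAt (fun w : (ℕ → α) × (ℕ → NN) => lam (w₀.1 0) (w.2 0) m) w₀ :=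
        (((continuous_apply m).comp (hlam (w₀.1 0))).comp
          ((continuous_apply 0).comp continuous_snd)).continuousAt
      exact cg.congr hev.symm
    · obtain ⟨m, rfl⟩ : ∃ m, k = 2*m+1 := ⟨k/2, by omega⟩
      have : (fun w : (ℕ → α) × (ℕ → NN) => Phi lam w (2*m+1))
          = (fun w => Phi lam w m) ∘ shiftW := by
        funext w; exact Phi_odd lam w m
      rw [this]
      exact (IH m (by omega)).comp shiftW_continuous

end Topo

theorem Phi_bijective (hinj : ∀ i, Function.Injective (lam i))
    (hdisj : ∀ i j, i ≠ j → Disjoint (range (lam i)) (range (lam j)))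
    (hcov : (⋃ i, range (lam i)) = univ) :
    Function.Bijective (Phi lam) := by
  classical
  have hex : ∀ u : NN, ∃ p : α × NN, lam p.1 p.2 = u := by
    intro u
    have : u ∈ ⋃ i, range (lam i) := by rw [hcov]; trivial
    obtain ⟨i, hi⟩ := mem_iUnion.1 this
    obtain ⟨v, hv⟩ := hi
    exact ⟨(i, v), hv⟩
  set pI : NN → α := fun u => (hex u).choose.1 with hpI
  set pV : NN → NN := fun u => (hex u).choose.2 with hpV
  have hpIV : ∀ u, lam (pI u) (pV u) = u := fun u => (hex u).choose_spec
  set Psi : NN → (ℕ → α) × (ℕ → NN) :=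
    fun y => (fun n => pI (ev (od^[n] y)), fun n => pV (ev (od^[n] y))) with hPsi
  have hleft : ∀ w, Psi (Phi lam w) = w := by
    intro w
    have hn : ∀ n, ev (od^[n] (Phi lam w)) = lam (w.1 n) (w.2 n) := by
      intro n
      rw [od_iterate_Phi, ev_Phi, shiftW_iterate]
      simp
    have hI : ∀ n, pI (ev (od^[n] (Phi lam w))) = w.1 n := by
      intro n
      by_contra hne
      have hd := hdisj _ _ hne
      rw [Set.disjoint_left] at hd
      exact hd ⟨pV _, hpIV (ev (od^[n] (Phi lam w)))⟩ ⟨w.2 n, (hn n).symm⟩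
    have hV : ∀ n, pV (ev (od^[n] (Phi lam w))) = w.2 n := by
      intro n
      apply hinj (w.1 n)
      conv_lhs => rw [← hI n]
      rw [hpIV]
      exact hn n
    exact Prod.ext (funext hI) (funext hV)
  have hright : ∀ k (y : NN), Phi lam (Psi y) k = y k := by
    intro k
    induction k using Nat.strong_induction_on with
    | _ k IH =>
      intro y
      by_cases hk : k % 2 = 0
      · obtain ⟨m, rfl⟩ : ∃ m, k = 2*m := ⟨k/2, by omega⟩
        rw [Phi_even]
        show lam (pI (ev (od^[0] y))) (pV (ev (od^[0] y))) m = y (2*m)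
        rw [Function.iterate_zero_apply, hpIV]
        rfl
      · obtain ⟨m, rfl⟩ : ∃ m, k = 2*m+1 := ⟨k/2, by omega⟩
        rw [Phi_odd]
        have hshiftPsi : shiftW (Psi y) = Psi (od y) := by
          refine Prod.ext (funext fun n => ?_) (funext fun n => ?_) <;>
            · show _ = _
              simp only [hPsi, shiftW, Function.iterate_succ_apply]
        rw [hshiftPsi, IH m (by omega)]
        rfl
  exact Function.bijective_iff_has_inverse.2
    ⟨Psi, hleft, fun y => funext (fun k => hright k y)⟩

end Braid

/-! ### domain manipulations -/

section Assembly
variable {α : Type u} [TopologicalSpace α] [DiscreteTopology α]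

def e2 : ℕ × ℕ ≃ ℕ := Denumerable.eqv (ℕ × ℕ)

def blowUp : (ℕ → α) → (ℕ → ℕ → α) := fun x n m => x (e2 (n, m))
def squash : (ℕ → ℕ → α) → (ℕ → α) := fun y k => y (e2.symm k).1 (e2.symm k).2

lemma blowUp_squash (y : ℕ → ℕ → α) : blowUp (squash y) = y := by
  funext n m
  simp [blowUp, squash]

lemma squash_blowUp (x : ℕ → α) : squash (blowUp x) = x := by
  funext k
  simp [blowUp, squash]

lemma blowUp_bijective : Function.Bijective (blowUp (α := α)) :=
  Function.bijective_iff_has_inverse.2 ⟨squash, squash_blowUp, blowUp_squash⟩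

lemma squash_bijective : Function.Bijective (squash (α := α)) :=
  Function.bijective_iff_has_inverse.2 ⟨blowUp, blowUp_squash, squash_blowUp⟩

lemma squash_continuous : Continuous (squash (α := α)) :=
  continuous_pi fun _ => (continuous_apply _).comp (continuous_apply _)

lemma blowUp_continuous : Continuous (blowUp (α := α)) :=
  continuous_pi fun _ => continuous_pi fun _ => continuous_apply _

def squash' : (ℕ → ℕ → α) → (ℕ → α) := squash

def piMap {β γ : Type*} (h : β → γ) : (ℕ → β) → (ℕ → γ) := fun y n => h (y n)

lemma piMap_bijective {β γ : Type*} {h : β → γ} (hb : Function.Bijective h) :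
    Function.Bijective (piMap (γ := γ) h) := by
  obtain ⟨g, hg1, hg2⟩ := Function.bijective_iff_has_inverse.1 hb
  exact Function.bijective_iff_has_inverse.2
    ⟨piMap g, fun y => funext fun n => hg1 _, fun y => funext fun n => hg2 _⟩

lemma piMap_continuous {β γ : Type*} [TopologicalSpace β] [TopologicalSpace γ] {h : β → γ}
    (hc : Continuous h) : Continuous (piMap (γ := γ) h) :=
  continuous_pi fun n => hc.comp (continuous_apply n)

def unzipPi {β γ : Type*} : (ℕ → β × γ) → (ℕ → β) × (ℕ → γ) :=
  fun z => (fun n => (z n).1, fun n => (z n).2)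

lemma unzipPi_bijective {β γ : Type*} : Function.Bijective (unzipPi (β := β) (γ := γ)) :=
  Function.bijective_iff_has_inverse.2
    ⟨fun p n => (p.1 n, p.2 n), fun z => funext fun n => rfl, fun p => rfl⟩

lemma unzipPi_continuous {β γ : Type*} [TopologicalSpace β] [TopologicalSpace γ] :
    Continuous (unzipPi (β := β) (γ := γ)) :=
  Continuous.prodMk (continuous_pi fun n => continuous_fst.comp (continuous_apply n))
    (continuous_pi fun n => continuous_snd.comp (continuous_apply n))

/-- head splitting using a bijection α ≃ ℤ × α -/
def splitHead (q : α ≃ ℤ × α) : (ℕ → α) → ℤ × (ℕ → α) :=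
  fun x => ((q (x 0)).1, fun n => Nat.casesOn n (q (x 0)).2 (fun m => x (m+1)))

lemma splitHead_bijective (q : α ≃ ℤ × α) : Function.Bijective (splitHead q) := by
  apply Function.bijective_iff_has_inverse.2
  refine ⟨fun p => fun n => Nat.casesOn n (q.symm (p.1, p.2 0)) (fun m => p.2 (m+1)), ?_, ?_⟩
  · intro x
    funext n
    match n with
    | 0 =>
        show q.symm ((q (x 0)).1, (q (x 0)).2) = x 0
        rw [Prod.mk.eta, Equiv.symm_apply_apply]
    | (m+1) => rfl
  · intro p
    refine Prod.ext ?_ (funext fun n => ?_)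
    · show (q (q.symm (p.1, p.2 0))).1 = p.1
      rw [Equiv.apply_symm_apply]
    · match n with
      | 0 =>
          show (q (q.symm (p.1, p.2 0))).2 = p.2 0
          rw [Equiv.apply_symm_apply]
      | (m+1) => rfl

lemma splitHead_continuous (q : α ≃ ℤ × α) : Continuous (splitHead q) := by
  apply Continuous.prodMk
  · exact (continuous_of_discreteTopology (α := α) (f := fun a => (q a).1)).comp
      (continuous_apply 0)
  · apply continuous_pi
    intro n
    cases n with
    | zero =>
        show Continuous fun x : ℕ → α => (q (x 0)).2
        exact (continuous_of_discreteTopology (α := α) (f := fun a => (q a).2)).comp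
          (continuous_apply 0)
    | succ m =>
        show Continuous fun x : ℕ → α => x (m+1)
        exact continuous_apply (m+1)

/-- the big domain rearrangement: (ℕ → α) → (ℕ → α) × (ℕ → NN) using s : α ≃ α × ℕ -/
def bigSplit (s : α ≃ α × ℕ) : (ℕ → α) → (ℕ → α) × (ℕ → NN) :=
  fun x => Prod.map squash id (unzipPi (piMap (fun z => unzipPi (piMap s z)) (blowUp x)))

lemma prodMap_bijective {β β' γ γ' : Type*} {h : β → β'} {g : γ → γ'}
    (hb : Function.Bijective h) (hg : Function.Bijective g) :
    Function.Bijective (Prod.map h g) := by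
  obtain ⟨h', hh1, hh2⟩ := Function.bijective_iff_has_inverse.1 hb
  obtain ⟨g', hg1, hg2⟩ := Function.bijective_iff_has_inverse.1 hg
  apply Function.bijective_iff_has_inverse.2
  refine ⟨Prod.map h' g', fun p => ?_, fun p => ?_⟩
  · exact Prod.ext (hh1 p.1) (hg1 p.2)
  · exact Prod.ext (hh2 p.1) (hg2 p.2)

lemma bigSplit_eq (s : α ≃ α × ℕ) : bigSplit s
    = (Prod.map squash id) ∘ unzipPi ∘ (piMap (fun z => unzipPi (piMap s z))) ∘ blowUp := rfl

lemma bigSplit_bijective (s : α ≃ α × ℕ) : Function.Bijective (bigSplit s) := by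
  rw [bigSplit_eq]
  exact (prodMap_bijective squash_bijective Function.bijective_id).comp
    (unzipPi_bijective.comp
      ((piMap_bijective (unzipPi_bijective.comp (piMap_bijective s.bijective))).comp
        blowUp_bijective))

lemma bigSplit_continuous (s : α ≃ α × ℕ) : Continuous (bigSplit s) := by
  rw [bigSplit_eq]
  exact (squash_continuous.prodMap continuous_id).comp
    (unzipPi_continuous.comp
      ((piMap_continuous (unzipPi_continuous.comp
        (piMap_continuous (continuous_of_discreteTopology)))).comp blowUp_continuous))

end Assembly

end Stmt12

open Cardinal Set

universe u

/-- If ℝ can be partitioned into κ Borel sets (κ infinite), then there is a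
continuous bijection from κ^ω (the countable power of the discrete space of
size κ) onto ℝ. Here the discrete space of size κ is a discrete space α. -/
theorem stmt_12 {α : Type u} [TopologicalSpace α] [DiscreteTopology α]
    (hα : ℵ₀ ≤ #α)
    (P : Set (Set ℝ))
    (hdisj : ∀ p ∈ P, ∀ q ∈ P, p ≠ q → Disjoint p q)
    (hne : ∀ p ∈ P, p.Nonempty)
    (hBorel : ∀ p ∈ P, MeasurableSet p)
    (hcover : ⋃₀ P = Set.univ)
    (hcard : Cardinal.lift.{u} #P = Cardinal.lift.{0} #α) :
    ∃ f : (ℕ → α) → ℝ, Continuous f ∧ Function.Bijective f := by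
  classical
  open Stmt12 in
  -- transfer the partition to an α-indexed family
  obtain ⟨ep⟩ : Nonempty (↥P ≃ α) := Cardinal.lift_mk_eq'.1 hcard
  set B : α → Set ℝ := fun i => ((ep.symm i : ↥P) : Set ℝ) with hB
  have hBmem : ∀ i, B i ∈ P := fun i => (ep.symm i).2
  have hdisjB : ∀ i j, i ≠ j → Disjoint (B i) (B j) := by
    intro i j hij
    apply hdisj _ (hBmem i) _ (hBmem j)
    intro hc
    apply hij
    have : ep.symm i = ep.symm j := Subtype.ext hc
    have := congrArg ep this
    rwa [Equiv.apply_symm_apply, Equiv.apply_symm_apply] at this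
  have hneB : ∀ i, (B i).Nonempty := fun i => hne _ (hBmem i)
  have hBorelB : ∀ i, MeasurableSet (B i) := fun i => hBorel _ (hBmem i)
  have hcoverB : ⋃ i, B i = Set.univ := by
    apply Set.Subset.antisymm (Set.subset_univ _)
    intro x _
    have : x ∈ ⋃₀ P := by rw [hcover]; trivial
    obtain ⟨p, hp, hxp⟩ := this
    refine Set.mem_iUnion.2 ⟨ep ⟨p, hp⟩, ?_⟩
    show x ∈ ((ep.symm (ep ⟨p, hp⟩) : ↥P) : Set ℝ)
    rw [Equiv.symm_apply_apply]
    exact hxp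
  -- the lambda family
  obtain ⟨lam, hlamc, hlami, hlamd, hlamu⟩ :=
    exists_lambda_family B hdisjB hneB hBorelB hcoverB
  -- cardinal bijections
  have hq : Nonempty (α ≃ ℤ × α) := by
    rw [← Cardinal.eq]
    rw [Cardinal.mk_prod, Cardinal.mk_int, Cardinal.lift_aleph0, Cardinal.lift_uzero]
    exact (Cardinal.aleph0_mul_eq hα).symm
  have hs : Nonempty (α ≃ α × ℕ) := by
    rw [← Cardinal.eq]
    rw [Cardinal.mk_prod, Cardinal.mk_nat, Cardinal.lift_aleph0, Cardinal.lift_uzero]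
    exact (Cardinal.mul_aleph0_eq hα).symm
  obtain ⟨q⟩ := hq
  obtain ⟨s⟩ := hs
  -- assemble
  refine ⟨fun x => zg ((splitHead q x).1, Phi lam (bigSplit s (splitHead q x).2)), ?_, ?_⟩
  · apply zg_continuous.comp
    apply Continuous.prodMk
    · exact continuous_fst.comp (splitHead_continuous q)
    · exact ((Phi_continuous lam hlamc).comp (bigSplit_continuous s)).comp
        (continuous_snd.comp (splitHead_continuous q))
  · have : (fun x => zg ((splitHead q x).1, Phi lam (bigSplit s (splitHead q x).2)))
        = zg ∘ (Prod.map id (Phi lam ∘ bigSplit s)) ∘ splitHead q := rfl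
    rw [this]
    apply Function.Bijective.comp
    · exact zg_bijective
    · apply Function.Bijective.comp
      · exact Stmt12.prodMap_bijective Function.bijective_id
          ((Phi_bijective lam hlami hlamd hlamu).comp (bigSplit_bijective s))
      · exact splitHead_bijective q
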